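/- If L and N are positive integers with L dividing N, then the index of Γ_0(N) ∩ Γ_1(L) in SL_2(ℤ) equals N · φ(L) · Π_{p | N} (1 + 1/p), where φ is Euler's totient function and the product runs over primes p dividing N. -/

import Mathlib

open CongruenceSubgroup Matrix MatrixGroups

namespace Gamma01Aux


variable {R : Type*} [CommRing R] {S : Type*} [CommRing S]

lemma SL2_row_mul (A B : SL(2, R)) (i : Fin 2) :
    (A * B : SL(2, R)).1 i = (A.1 i) ᵥ* B.1 := by
  rw [Matrix.SpecialLinearGroup.coe_mul, Matrix.mul_apply_eq_vecMul]

lemma SL2_unip (A : SL(2, R)) (h0 : A.1 1 0 = 0) (h1 : A.1 1 1 = 1) :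
    A.1 = !![1, A.1 0 1; 0, 1] := by
  have hd : A.1.det = 1 := A.2
  rw [Matrix.det_fin_two, h0, h1, mul_one, mul_zero, sub_zero] at hd
  ext i j
  fin_cases i <;> fin_cases j <;> simp [h0, h1, hd]

/-- unimodular pairs -/
abbrev UniPair (R : Type*) [CommRing R] : Type _ :=
  {v : Fin 2 → R // IsCoprime (v 0) (v 1)}

noncomputable def sec (w : UniPair R) : SL(2, R) :=
  (w.2.exists_SL2_row 1).choose

lemma sec_row (w : UniPair R) : (sec w).1 1 = w.1 := by
  funext j
  fin_cases j
  · exact (w.2.exists_SL2_row 1).choose_spec.1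
  · exact (w.2.exists_SL2_row 1).choose_spec.2

def rowOf (A : SL(2, R)) : UniPair R :=
  ⟨A.1 1, A.isCoprime_row 1⟩

def Tb (b : R) : SL(2, R) := ⟨!![1, b; 0, 1], by simp [Matrix.det_fin_two_of]⟩

noncomputable def slEquiv (R : Type*) [CommRing R] : SL(2, R) ≃ UniPair R × R where
  toFun A := (rowOf A, (A * (sec (rowOf A))⁻¹).1 0 1)
  invFun p := Tb p.2 * sec p.1
  left_inv A := by
    have hrow : (A * (sec (rowOf A))⁻¹).1 1 = (1 : SL(2, R)).1 1 := by
      rw [SL2_row_mul]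
      have : A.1 1 = (sec (rowOf A)).1 1 := (sec_row (rowOf A)).symm
      rw [this, ← SL2_row_mul, mul_inv_cancel]
    have h0 : (A * (sec (rowOf A))⁻¹).1 1 0 = 0 := by
      rw [hrow]; simp [Matrix.SpecialLinearGroup.coe_one]
    have h1 : (A * (sec (rowOf A))⁻¹).1 1 1 = 1 := by
      rw [hrow]; simp [Matrix.SpecialLinearGroup.coe_one]
    have hC : Tb ((A * (sec (rowOf A))⁻¹).1 0 1) = A * (sec (rowOf A))⁻¹ :=
      Subtype.ext (SL2_unip _ h0 h1).symm
    show Tb _ * sec (rowOf A) = A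
    rw [hC, inv_mul_cancel_right]
  right_inv p := by
    obtain ⟨w, b⟩ := p
    have hrow : (Tb b * sec w).1 1 = w.1 := by
      rw [SL2_row_mul]
      funext j
      rw [← sec_row w]
      simp [Tb, Matrix.vecMul, dotProduct, Fin.sum_univ_two]
    have hw : rowOf (Tb b * sec w) = w := Subtype.ext hrow
    refine Prod.ext hw ?_
    show (Tb b * sec w * (sec (rowOf (Tb b * sec w)))⁻¹).1 0 1 = b
    rw [hw, mul_inv_cancel_right]
    simp [Tb]

lemma card_SL2 (R : Type*) [CommRing R] :
    Nat.card SL(2, R) = Nat.card (UniPair R) * Nat.card R := by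
  rw [Nat.card_congr (slEquiv R), Nat.card_prod]



def UniPair.congr (e : R ≃+* S) : UniPair R ≃ UniPair S where
  toFun w := ⟨fun j => e (w.1 j), w.2.map (e : R →+* S)⟩
  invFun w := ⟨fun j => e.symm (w.1 j), w.2.map (e.symm : S →+* R)⟩
  left_inv w := Subtype.ext (funext fun j => e.symm_apply_apply _)
  right_inv w := Subtype.ext (funext fun j => e.apply_symm_apply _)

lemma isCoprime_prod_iff {a b : R × S} :
    IsCoprime a b ↔ IsCoprime a.1 b.1 ∧ IsCoprime a.2 b.2 := by
  constructor
  · intro h; exact ⟨h.map (RingHom.fst R S), h.map (RingHom.snd R S)⟩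
  · rintro ⟨⟨x1, y1, h1⟩, ⟨x2, y2, h2⟩⟩
    exact ⟨(x1, x2), (y1, y2), Prod.ext h1 h2⟩

def UniPair.prodEquiv : UniPair (R × S) ≃ UniPair R × UniPair S where
  toFun w := (⟨fun j => (w.1 j).1, (isCoprime_prod_iff.mp w.2).1⟩,
              ⟨fun j => (w.1 j).2, (isCoprime_prod_iff.mp w.2).2⟩)
  invFun p := ⟨fun j => (p.1.1 j, p.2.1 j), isCoprime_prod_iff.mpr ⟨p.1.2, p.2.2⟩⟩
  left_inv w := Subtype.ext (funext fun j => rfl)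
  right_inv p := Prod.ext (Subtype.ext rfl) (Subtype.ext rfl)

noncomputable def uCount (n : ℕ) : ℕ := Nat.card (UniPair (ZMod n))

lemma uCount_mul {m n : ℕ} (h : m.Coprime n) : uCount (m * n) = uCount m * uCount n := by
  rw [uCount, Nat.card_congr ((UniPair.congr (ZMod.chineseRemainder h)).trans UniPair.prodEquiv),
    Nat.card_prod]
  rfl

lemma uCount_one : uCount 1 = 1 := by
  haveI : Unique (UniPair (ZMod 1)) :=
    ⟨⟨⟨fun _ => 0, ⟨0, 0, Subsingleton.elim _ _⟩⟩⟩,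
      fun v => Subtype.ext (funext fun i => Subsingleton.elim _ _)⟩
  exact Nat.card_unique

lemma isUnit_isCoprime (a b : R) (h : IsUnit a) : IsCoprime a b := by
  obtain ⟨w, rfl⟩ := h
  exact ⟨((w⁻¹ : Rˣ) : R), 0, by simp⟩

lemma isCoprime_zmod_prime_pow {p k : ℕ} (hp : p.Prime) (hk : 0 < k) (a b : ZMod (p ^ k)) :
    IsCoprime a b ↔ IsUnit a ∨ IsUnit b := by
  haveI : Fact p.Prime := ⟨hp⟩
  haveI : NeZero (p ^ k) := ⟨(pow_pos hp.pos k).ne'⟩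
  constructor
  · intro h
    by_contra hcon
    push_neg at hcon
    have hdvd : ∀ x : ZMod (p ^ k), ¬ IsUnit x →
        ZMod.castHom (dvd_pow_self p hk.ne') (ZMod p) x = 0 := by
      intro x hx
      have hxv : ((x.val : ℕ) : ZMod (p ^ k)) = x := by
        rw [ZMod.natCast_val, ZMod.cast_id]
      have hnc : ¬ x.val.Coprime (p ^ k) := by
        rw [← ZMod.isUnit_iff_coprime, hxv]; exact hx
      have hpv : p ∣ x.val := by
        have hg : Nat.gcd x.val (p ^ k) ≠ 1 := hnc
        obtain ⟨q, hq, hq2⟩ := Nat.exists_prime_and_dvd hg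
        have hq3 : q ∣ p ^ k := hq2.trans (Nat.gcd_dvd_right _ _)
        have hqp : q = p := (Nat.prime_dvd_prime_iff_eq hq hp).mp (hq.dvd_of_dvd_pow hq3)
        subst hqp
        exact hq2.trans (Nat.gcd_dvd_left _ _)
      have : ZMod.castHom (dvd_pow_self p hk.ne') (ZMod p) x = ((x.val : ℕ) : ZMod p) := by
        rw [ZMod.castHom_apply, ZMod.natCast_val]
      rw [this, ZMod.natCast_eq_zero_iff]
      exact hpv
    have h2 := h.map (ZMod.castHom (dvd_pow_self p hk.ne') (ZMod p))
    rw [hdvd a hcon.1, hdvd b hcon.2] at h2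
    rw [isCoprime_zero_left] at h2
    exact not_isUnit_zero h2
  · rintro (h | h)
    · exact isUnit_isCoprime a b h
    · exact (isUnit_isCoprime b a h).symm

lemma card_isUnit_zmod (n : ℕ) [NeZero n] :
    Nat.card {a : ZMod n // IsUnit a} = Nat.totient n := by
  have e : (ZMod n)ˣ ≃ {a : ZMod n // IsUnit a} :=
    ⟨fun u => ⟨u, u.isUnit⟩, fun a => a.2.unit, fun u => Units.ext u.isUnit.unit_spec,
      fun a => Subtype.ext a.2.unit_spec⟩
  rw [← Nat.card_congr e, Nat.card_eq_fintype_card, ZMod.card_units_eq_totient]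

lemma card_split {α : Type*} [Finite α] (p : α → Prop) :
    Nat.card {a // p a} + Nat.card {a // ¬ p a} = Nat.card α := by
  classical
  rw [← Nat.card_sum, Nat.card_congr (Equiv.sumCompl p)]

lemma card_nonunit_zmod (n : ℕ) [NeZero n] :
    Nat.card {a : ZMod n // ¬ IsUnit a} = n - Nat.totient n := by
  have h := card_split (fun a : ZMod n => IsUnit a)
  rw [card_isUnit_zmod, Nat.card_zmod] at h
  omega

def nonUnitPairEquiv (R : Type*) [CommRing R] :
    {v : Fin 2 → R // ¬ (IsUnit (v 0) ∨ IsUnit (v 1))} ≃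
      {a : R // ¬ IsUnit a} × {a : R // ¬ IsUnit a} where
  toFun w := (⟨w.1 0, fun h => w.2 (Or.inl h)⟩, ⟨w.1 1, fun h => w.2 (Or.inr h)⟩)
  invFun a := ⟨![a.1.1, a.2.1], by
    rintro (h | h)
    · exact a.1.2 (by simpa using h)
    · exact a.2.2 (by simpa using h)⟩
  left_inv w := Subtype.ext (funext fun j => by fin_cases j <;> simp)
  right_inv a := Prod.ext (Subtype.ext (by simp)) (Subtype.ext (by simp))

lemma uCount_prime_pow_aux {p k : ℕ} (hp : p.Prime) (hk : 0 < k) :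
    uCount (p ^ k) = (p ^ k) ^ 2 - (p ^ k - Nat.totient (p ^ k)) ^ 2 := by
  haveI : NeZero (p ^ k) := ⟨(pow_pos hp.pos k).ne'⟩
  set q := p ^ k with hq
  have e1 : UniPair (ZMod q) ≃ {v : Fin 2 → ZMod q // IsUnit (v 0) ∨ IsUnit (v 1)} :=
    Equiv.subtypeEquivRight fun v => isCoprime_zmod_prime_pow hp hk _ _
  have e2 := nonUnitPairEquiv (ZMod q)
  have h := card_split (fun v : Fin 2 → ZMod q => IsUnit (v 0) ∨ IsUnit (v 1))
  rw [Nat.card_congr e2, Nat.card_prod, card_nonunit_zmod, Nat.card_fun, Nat.card_zmod,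
    Nat.card_eq_fintype_card (α := Fin 2), Fintype.card_fin] at h
  have htot : Nat.totient q ≤ q := Nat.totient_le q
  have : uCount q = Nat.card {v : Fin 2 → ZMod q // IsUnit (v 0) ∨ IsUnit (v 1)} :=
    Nat.card_congr e1
  have h2 : Nat.card {v : Fin 2 → ZMod q // IsUnit (v 0) ∨ IsUnit (v 1)} =
      q ^ 2 - (q - Nat.totient q) * (q - Nat.totient q) := Nat.eq_sub_of_add_eq h
  rw [this, h2, ← pow_two]

lemma uCount_formula : ∀ {n : ℕ}, 0 < n →
    (uCount n : ℚ) = n * Nat.totient n * ∏ p ∈ n.primeFactors, (1 + 1 / (p : ℚ)) := by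
  have key : ∀ n : ℕ, 0 < n →
      (uCount n : ℚ) = n * Nat.totient n * ∏ p ∈ n.primeFactors, (1 + 1 / (p : ℚ)) := by
    intro n
    induction n using Nat.recOnPosPrimePosCoprime with
    | prime_pow p k hp hk =>
      intro _
      have hpp : p.Prime := by first | exact hp | exact Nat.prime_iff.mpr hp
      have hppos : 0 < p := hpp.pos
      obtain ⟨m, rfl⟩ : ∃ m, k = m + 1 := ⟨k - 1, by omega⟩
      have htot : Nat.totient (p ^ (m + 1)) = p ^ m * (p - 1) := by
        rw [Nat.totient_prime_pow hpp (Nat.succ_pos m)]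
        simp
      have hsub : p ^ (m + 1) - Nat.totient (p ^ (m + 1)) = p ^ m := by
        rw [htot, pow_succ, Nat.mul_sub, Nat.mul_one, Nat.sub_sub_self
          (Nat.le_mul_of_pos_right _ hppos)]
      rw [uCount_prime_pow_aux hpp (Nat.succ_pos m), hsub, htot,
        Nat.primeFactors_prime_pow (Nat.succ_ne_zero m) hpp, Finset.prod_singleton]
      have hle : (p ^ m) ^ 2 ≤ (p ^ (m + 1)) ^ 2 :=
        Nat.pow_le_pow_left (Nat.pow_le_pow_right hppos (Nat.le_succ m)) 2
      have hp0 : (p : ℚ) ≠ 0 := Nat.cast_ne_zero.mpr hppos.ne'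
      push_cast [Nat.cast_sub hle, Nat.cast_sub hpp.one_le]
      field_simp
      ring
    | zero => intro h; exact absurd h (lt_irrefl 0)
    | one =>
      intro _
      simp [uCount_one]
    | coprime a b ha hb hab iha ihb =>
      intro _
      have ha0 : 0 < a := by omega
      have hb0 : 0 < b := by omega
      rw [uCount_mul hab, Nat.totient_mul hab,
        Nat.Coprime.primeFactors_mul hab,
        Finset.prod_union (Nat.Coprime.disjoint_primeFactors hab)]
      push_cast [iha ha0, ihb hb0]
      ring
  exact fun {n} => key n
lemma exists_coprime_lift (n : ℕ) (c d : ℤ) (h : IsCoprime (c : ZMod n) (d : ZMod n)) :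
    ∃ c' d' : ℤ, IsCoprime c' d' ∧ (c' : ZMod n) = (c : ZMod n) ∧ (d' : ZMod n) = (d : ZMod n) := by
  rcases eq_or_ne n 0 with rfl | hn
  · exact ⟨c, d, h, rfl, rfl⟩
  obtain ⟨xb, yb, hxy⟩ := h
  obtain ⟨x, rfl⟩ := ZMod.intCast_surjective xb
  obtain ⟨y, rfl⟩ := ZMod.intCast_surjective yb
  have hz : ((x * c + y * d - 1 : ℤ) : ZMod n) = 0 := by
    push_cast
    rw [hxy]
    ring
  rw [ZMod.intCast_zmod_eq_zero_iff_dvd] at hz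
  obtain ⟨z, hz⟩ := hz
  set c₀ : ℤ := if c = 0 then c + n else c with hc₀def
  have hc₀n : ((c₀ : ℤ) : ZMod n) = (c : ZMod n) := by
    rw [hc₀def]
    split_ifs
    · push_cast
      simp
    · rfl
  have hc₀0 : c₀ ≠ 0 := by
    rw [hc₀def]
    split_ifs with hc
    · subst hc
      simpa using hn
    · exact hc
  obtain ⟨z', hz'⟩ : ∃ z', x * c₀ + y * d - 1 = n * z' := by
    rw [hc₀def]
    split_ifs
    · exact ⟨z + x, by linear_combination hz⟩
    · exact ⟨z, hz⟩
  have key : ∀ p : ℕ, p.Prime → (p : ℤ) ∣ c₀ → (p : ℤ) ∣ d → ¬ ((p : ℤ) ∣ (n : ℤ)) := by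
    intro p pp h1 h2 h3
    have hd1 : (p : ℤ) ∣ 1 := by
      have he : (1 : ℤ) = x * c₀ + y * d - n * z' := by linarith
      rw [he]
      exact dvd_sub (dvd_add (Dvd.dvd.mul_left h1 x) (Dvd.dvd.mul_left h2 y))
        (Dvd.dvd.mul_right h3 z')
    have : p ∣ 1 := by exact_mod_cast hd1
    have h4 := Nat.dvd_one.mp this
    have := pp.one_lt
    omega
  set t : ℕ := ∏ q ∈ c₀.natAbs.primeFactors.filter (fun q : ℕ => ¬ ((q : ℤ) ∣ d)), q with htdef
  refine ⟨c₀, d + n * t, ?_, hc₀n, by push_cast; simp⟩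
  rw [Int.isCoprime_iff_gcd_eq_one]
  by_contra hg
  obtain ⟨p, pp, hpg⟩ := Nat.exists_prime_and_dvd hg
  have hpc : (p : ℤ) ∣ c₀ :=
    dvd_trans (Int.natCast_dvd_natCast.mpr hpg) (Int.gcd_dvd_left _ _)
  have hpd' : (p : ℤ) ∣ d + n * t :=
    dvd_trans (Int.natCast_dvd_natCast.mpr hpg) (Int.gcd_dvd_right _ _)
  have hppz : Prime (p : ℤ) := Nat.prime_iff_prime_int.mp pp
  by_cases hpd : (p : ℤ) ∣ d
  · have hpn : ¬ (p : ℤ) ∣ (n : ℤ) := key p pp hpc hpd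
    have hpnt : (p : ℤ) ∣ (n : ℤ) * t := by
      simpa using dvd_sub hpd' hpd
    have hpt : (p : ℤ) ∣ (t : ℤ) := (hppz.dvd_or_dvd hpnt).resolve_left hpn
    have hptn : p ∣ t := Int.natCast_dvd_natCast.mp hpt
    rw [htdef] at hptn
    obtain ⟨q, hq, hq2⟩ := (Prime.dvd_finset_prod_iff pp.prime _).mp hptn
    rw [Finset.mem_filter] at hq
    have hqp : p = q :=
      (Nat.prime_dvd_prime_iff_eq pp (Nat.prime_of_mem_primeFactors hq.1)).mp hq2
    exact hq.2 (hqp ▸ hpd)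
  · have hmem : p ∈ c₀.natAbs.primeFactors.filter (fun q : ℕ => ¬ ((q : ℤ) ∣ d)) := by
      rw [Finset.mem_filter, Nat.mem_primeFactors]
      refine ⟨⟨pp, ?_, Int.natAbs_ne_zero.mpr hc₀0⟩, hpd⟩
      rw [← Int.natAbs_natCast p]
      exact Int.natAbs_dvd_natAbs.mpr hpc
    have hpt : p ∣ t := by
      rw [htdef]
      exact Finset.dvd_prod_of_mem _ hmem
    have hnt : (p : ℤ) ∣ (n : ℤ) * t := Dvd.dvd.mul_left (Int.natCast_dvd_natCast.mpr hpt) n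
    have : (p : ℤ) ∣ d := by
      simpa using dvd_sub hpd' hnt
    exact hpd this

lemma SLMOD_surj (n : ℕ) :
    Function.Surjective
      (Matrix.SpecialLinearGroup.map (n := Fin 2) (Int.castRingHom (ZMod n))) := by
  intro M
  obtain ⟨c₀, hc₀⟩ := ZMod.intCast_surjective (M.1 1 0)
  obtain ⟨d₀, hd₀⟩ := ZMod.intCast_surjective (M.1 1 1)
  have hcop : IsCoprime ((c₀ : ZMod n)) ((d₀ : ZMod n)) := by
    rw [hc₀, hd₀]
    exact M.isCoprime_row 1
  obtain ⟨c, d, hcd, hc, hd⟩ := exists_coprime_lift n c₀ d₀ hcop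
  obtain ⟨B, hB0, hB1⟩ := hcd.exists_SL2_row 1
  set f := Int.castRingHom (ZMod n) with hf
  set Bb := Matrix.SpecialLinearGroup.map (n := Fin 2) f B with hBb
  have hentry : ∀ (A : SL(2, ℤ)) (i j : Fin 2),
      (Matrix.SpecialLinearGroup.map (n := Fin 2) f A).1 i j = ((A.1 i j : ℤ) : ZMod n) := by
    intro A i j
    rfl
  have hrowB : Bb.1 1 = M.1 1 := by
    funext j
    fin_cases j
    · rw [hBb, hentry]
      show ((B.1 1 0 : ℤ) : ZMod n) = M.1 1 0
      rw [show B.1 1 0 = c from hB0, hc, hc₀]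
    · rw [hBb, hentry]
      show ((B.1 1 1 : ℤ) : ZMod n) = M.1 1 1
      rw [show B.1 1 1 = d from hB1, hd, hd₀]
  have hCrow : (M * Bb⁻¹).1 1 = (1 : SL(2, ZMod n)).1 1 := by
    rw [SL2_row_mul, ← hrowB, ← SL2_row_mul, mul_inv_cancel]
  have h0 : (M * Bb⁻¹).1 1 0 = 0 := by
    rw [hCrow]
    simp [Matrix.SpecialLinearGroup.coe_one]
  have h1 : (M * Bb⁻¹).1 1 1 = 1 := by
    rw [hCrow]
    simp [Matrix.SpecialLinearGroup.coe_one]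
  obtain ⟨b, hb⟩ := ZMod.intCast_surjective ((M * Bb⁻¹).1 0 1)
  set T : SL(2, ℤ) := ⟨!![1, b; 0, 1], by simp [Matrix.det_fin_two_of]⟩ with hT
  have hTmap : Matrix.SpecialLinearGroup.map (n := Fin 2) f T = M * Bb⁻¹ := by
    apply Subtype.ext
    rw [SL2_unip (M * Bb⁻¹) h0 h1, ← hb]
    funext i j
    fin_cases i <;> fin_cases j <;>
      (rw [hentry]; simp [hT])
  refine ⟨T * B, ?_⟩
  rw [_root_.map_mul, hTmap, ← hBb, inv_mul_cancel_right]



def Hsub (N L : ℕ) (hLN : L ∣ N) : Subgroup SL(2, ZMod N) where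
  carrier := {A | A.1 1 0 = 0 ∧ ZMod.castHom hLN (ZMod L) (A.1 0 0) = 1 ∧
    ZMod.castHom hLN (ZMod L) (A.1 1 1) = 1}
  one_mem' := ⟨by simp, by simp [ZMod.cast_one hLN], by simp [ZMod.cast_one hLN]⟩
  mul_mem' := by
    rintro A B ⟨ha1, ha2, ha3⟩ ⟨hb1, hb2, hb3⟩
    have m : ∀ i j : Fin 2, (A * B).1 i j = A.1 i 0 * B.1 0 j + A.1 i 1 * B.1 1 j := by
      intro i j
      rw [Matrix.SpecialLinearGroup.coe_mul, Matrix.mul_apply, Fin.sum_univ_two]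
    refine ⟨?_, ?_, ?_⟩
    · rw [m, ha1, hb1, zero_mul, mul_zero, add_zero]
    · rw [m, _root_.map_add, _root_.map_mul, _root_.map_mul, hb1, _root_.map_zero, mul_zero,
        add_zero, ha2, hb2, one_mul]
    · rw [m, _root_.map_add, _root_.map_mul, _root_.map_mul, ha1, _root_.map_zero, zero_mul,
        zero_add, ha3, hb3, one_mul]
  inv_mem' := by
    rintro A ⟨h1, h2, h3⟩
    refine ⟨?_, ?_, ?_⟩ <;>
      rw [Matrix.SpecialLinearGroup.SL2_inv_expl A] <;>
      simp only [Matrix.cons_val_zero, Matrix.cons_val_one, Matrix.head_cons]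
    · rw [h1, neg_zero]
    · exact h3
    · exact h2

lemma mem_Hsub {N L : ℕ} {hLN : L ∣ N} {A : SL(2, ZMod N)} :
    A ∈ Hsub N L hLN ↔ A.1 1 0 = 0 ∧ ZMod.castHom hLN (ZMod L) (A.1 0 0) = 1 ∧
      ZMod.castHom hLN (ZMod L) (A.1 1 1) = 1 := Iff.rfl

lemma inf_eq_comap (N L : ℕ) (hLN : L ∣ N) :
    Gamma0 N ⊓ Gamma1 L =
      (Hsub N L hLN).comap (Matrix.SpecialLinearGroup.map (n := Fin 2)
        (Int.castRingHom (ZMod N))) := by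
  ext γ
  have hentry : ∀ i j : Fin 2,
      ((Matrix.SpecialLinearGroup.map (n := Fin 2) (Int.castRingHom (ZMod N))) γ).1 i j
        = ((γ.1 i j : ℤ) : ZMod N) := fun i j => rfl
  have hcast : ∀ x : ℤ, ZMod.castHom hLN (ZMod L) ((x : ZMod N)) = (x : ZMod L) :=
    fun x => map_intCast _ x
  rw [Subgroup.mem_inf, Subgroup.mem_comap, mem_Hsub, Gamma0_mem, Gamma1_mem]
  rw [hentry, hentry, hentry, hcast, hcast]
  constructor
  · rintro ⟨h0, h1, h2, h3⟩
    exact ⟨h0, h1, h2⟩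
  · rintro ⟨h0, h1, h2⟩
    refine ⟨h0, h1, h2, ?_⟩
    have := congrArg (ZMod.castHom hLN (ZMod L)) h0
    rw [hcast] at this
    simpa using this

lemma det_Hsub {N L : ℕ} {hLN : L ∣ N} (x : ↥(Hsub N L hLN)) :
    x.1.1 0 0 * x.1.1 1 1 = 1 := by
  have hd : x.1.1.det = 1 := x.1.2
  rw [Matrix.det_fin_two, x.2.1, mul_zero, sub_zero] at hd
  exact hd

noncomputable def HsubEquiv (N L : ℕ) (hLN : L ∣ N) :
    ↥(Hsub N L hLN) ≃ ↥(ZMod.unitsMap hLN).ker × ZMod N where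
  toFun x := (⟨Units.mkOfMulEqOne _ _ (det_Hsub x), by
      rw [MonoidHom.mem_ker]
      apply Units.ext
      show (ZMod.castHom hLN (ZMod L)) ((Units.mkOfMulEqOne _ _ (det_Hsub x) : (ZMod N)ˣ) :
        ZMod N) = 1
      rw [Units.val_mkOfMulEqOne]
      exact x.2.2.1⟩, x.1.1 0 1)
  invFun p := ⟨⟨!![(p.1.1 : ZMod N), p.2; 0, ((p.1.1⁻¹ : (ZMod N)ˣ) : ZMod N)], by
      rw [Matrix.det_fin_two_of]
      simp⟩, by
    have h00 : ZMod.castHom hLN (ZMod L) ((p.1.1 : (ZMod N)ˣ) : ZMod N) = 1 :=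
      congrArg Units.val (MonoidHom.mem_ker.mp p.1.2)
    have hk2 : ZMod.unitsMap hLN (p.1.1⁻¹) = 1 := by
      rw [map_inv, MonoidHom.mem_ker.mp p.1.2, inv_one]
    have h11 : ZMod.castHom hLN (ZMod L) ((p.1.1⁻¹ : (ZMod N)ˣ) : ZMod N) = 1 :=
      congrArg Units.val hk2
    refine ⟨?_, ?_, ?_⟩
    · show (!![(p.1.1 : ZMod N), p.2; 0, ((p.1.1⁻¹ : (ZMod N)ˣ) : ZMod N)] :
        Matrix (Fin 2) (Fin 2) (ZMod N)) 1 0 = 0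
      simp
    · show ZMod.castHom hLN (ZMod L) ((!![(p.1.1 : ZMod N), p.2; 0,
        ((p.1.1⁻¹ : (ZMod N)ˣ) : ZMod N)] : Matrix (Fin 2) (Fin 2) (ZMod N)) 0 0) = 1
      rw [show (!![(p.1.1 : ZMod N), p.2; 0, ((p.1.1⁻¹ : (ZMod N)ˣ) : ZMod N)] :
        Matrix (Fin 2) (Fin 2) (ZMod N)) 0 0 = ((p.1.1 : (ZMod N)ˣ) : ZMod N) from rfl]
      exact h00
    · show ZMod.castHom hLN (ZMod L) ((!![(p.1.1 : ZMod N), p.2; 0,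
        ((p.1.1⁻¹ : (ZMod N)ˣ) : ZMod N)] : Matrix (Fin 2) (Fin 2) (ZMod N)) 1 1) = 1
      rw [show (!![(p.1.1 : ZMod N), p.2; 0, ((p.1.1⁻¹ : (ZMod N)ˣ) : ZMod N)] :
        Matrix (Fin 2) (Fin 2) (ZMod N)) 1 1 = ((p.1.1⁻¹ : (ZMod N)ˣ) : ZMod N) from rfl]
      exact h11⟩
  left_inv x := by
    apply Subtype.ext
    apply Subtype.ext
    have hmat : x.1.1 = !![x.1.1 0 0, x.1.1 0 1; 0, x.1.1 1 1] := by
      ext i j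
      fin_cases i <;> fin_cases j <;> simp [x.2.1]
    show !![_, _; 0, _] = x.1.1
    rw [hmat]
    rfl
  right_inv p := by
    refine Prod.ext (Subtype.ext (Units.ext ?_)) ?_
    · show ((Units.mkOfMulEqOne _ _ _ : (ZMod N)ˣ) : ZMod N) = (p.1.1 : ZMod N)
      rw [Units.val_mkOfMulEqOne]
      rfl
    · show (!![(p.1.1 : ZMod N), p.2; 0, _] : Matrix (Fin 2) (Fin 2) (ZMod N)) 0 1 = p.2
      simp

lemma card_Hsub (N L : ℕ) [NeZero N] (hLN : L ∣ N) :
    Nat.card (Hsub N L hLN) = Nat.card (ZMod.unitsMap hLN).ker * N := by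
  rw [Nat.card_congr (HsubEquiv N L hLN), Nat.card_prod, Nat.card_zmod]

lemma card_ker_unitsMap (N L : ℕ) [NeZero N] [NeZero L] (hLN : L ∣ N) :
    Nat.card (ZMod.unitsMap hLN).ker * Nat.totient L = Nat.totient N := by
  have h1 : Nat.card (ZMod N)ˣ =
      Nat.card ((ZMod N)ˣ ⧸ (ZMod.unitsMap hLN).ker) * Nat.card (ZMod.unitsMap hLN).ker :=
    Subgroup.card_eq_card_quotient_mul_card_subgroup _
  have h2 : Nat.card ((ZMod N)ˣ ⧸ (ZMod.unitsMap hLN).ker) = Nat.card (ZMod L)ˣ :=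
    Nat.card_congr (QuotientGroup.quotientKerEquivOfSurjective _
      (ZMod.unitsMap_surjective hLN)).toEquiv
  rw [h2] at h1
  rw [Nat.card_eq_fintype_card, ZMod.card_units_eq_totient] at h1
  rw [Nat.card_eq_fintype_card (α := (ZMod L)ˣ), ZMod.card_units_eq_totient] at h1
  rw [h1]
  ring


lemma uCount_def (n : ℕ) : uCount n = Nat.card (UniPair (ZMod n)) := rfl

end Gamma01Aux

open Gamma01Aux in
theorem Gamma0_inter_Gamma1_index (N L : ℕ) (hN : 0 < N) (hL : 0 < L) (hLN : L ∣ N) :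
    (((Gamma0 N) ⊓ (Gamma1 L)).index : ℚ) =
      N * Nat.totient L * ∏ p ∈ N.primeFactors, (1 + 1 / (p : ℚ)) := by
  haveI : NeZero N := ⟨hN.ne'⟩
  haveI : NeZero L := ⟨hL.ne'⟩
  have hidx : ((Gamma0 N) ⊓ (Gamma1 L)).index = (Hsub N L hLN).index := by
    rw [inf_eq_comap N L hLN]
    exact Subgroup.index_comap_of_surjective _ (SLMOD_surj N)
  have hcard := Subgroup.card_mul_index (Hsub N L hLN)
  rw [card_Hsub N L hLN, card_SL2, Nat.card_zmod, ← uCount_def] at hcard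
  set k := Nat.card (ZMod.unitsMap hLN).ker with hkdef
  have hkφ : k * Nat.totient L = Nat.totient N := card_ker_unitsMap N L hLN
  have hk0 : 0 < k := Nat.card_pos
  have hNQ : (N : ℚ) ≠ 0 := Nat.cast_ne_zero.mpr hN.ne'
  have hkQ : (k : ℚ) ≠ 0 := Nat.cast_ne_zero.mpr hk0.ne'
  have hc3 : ((k : ℚ) * N) * ((Hsub N L hLN).index : ℚ) = (uCount N : ℚ) * N := by
    exact_mod_cast congrArg (fun t : ℕ => (t : ℚ)) hcard
  have hu := uCount_formula hN
  have hφN : (Nat.totient N : ℚ) = (k : ℚ) * Nat.totient L := by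
    exact_mod_cast (congrArg (fun t : ℕ => (t : ℚ)) hkφ).symm
  rw [hu, hφN] at hc3
  rw [hidx]
  have hkN : ((k : ℚ) * N) ≠ 0 := mul_ne_zero hkQ hNQ
  apply mul_left_cancel₀ hkN
  rw [hc3]
  ring
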